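/- Fix real numbers a₁, α₁, b₁, β₁ with a₁ − α₁ ≥ 1, b₁ − β₁ ≥ 1 and a₁ + b₁ > 0. There exists a constant C > 0, depending only on a₁, α₁, b₁, β₁, with the following property. Let s' ∈ ℝ, let ρ(s) = 1 + exp(|s|), and let ρ₁, ρ₂ each be either ρ or ρ^{−1}. Let α, β, a, b : [s',∞) → ℝ be measurable functions and α₀, β₀, a₀, b₀ ≥ 0 such that for all u ≥ s': |α(u)| ≤ α₀·e^{α₁u}, |β(u)| ≤ β₀·e^{β₁u}, |a(u)| ≤ a₀·e^{−a₁u}, |b(u)| ≤ b₀·e^{−b₁u}. Define the kernel D(u,v) = α(u)·β(v)·∫₀^∞ a(u+z)·b(v+z) dz for u, v ≥ s'. Then (∫_{s'}^∞ ∫_{s'}^∞ D(u,v)² · ρ₂(u) · ρ₁(v)^{−1} du dv)^{1/2} ≤ C · (α₀β₀a₀b₀/(a₁+b₁)) · exp(−(a₁+b₁−α₁−β₁)·s' + |s'|). -/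

import Mathlib

open MeasureTheory Real Set Filter

/-- The weight function ρ(s) = 1 + exp |s|. -/
noncomputable def rhoWeight : ℝ → ℝ := fun s => 1 + Real.exp |s|

lemma my_integral_exp_neg_mul_Ioi {k : ℝ} (hk : 0 < k) (t : ℝ) :
    ∫ x in Ioi t, Real.exp (-k * x) = Real.exp (-k * t) / k := by
  have hderiv : ∀ x ∈ Ici t, HasDerivAt (fun x => -Real.exp (-k * x) / k)
      (Real.exp (-k * x)) x := by
    intro x _
    have h1 : HasDerivAt (fun x : ℝ => -k * x) (-k) x := by
      simpa using (hasDerivAt_id x).const_mul (-k)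
    have h2 := (h1.exp.div_const k).neg
    have e : (fun x => -Real.exp (-k * x) / k) = -fun x => Real.exp (-k * x) / k := by
      funext y; simp only [Pi.neg_apply, neg_div]
    rw [e]
    refine h2.congr_deriv ?_
    rw [mul_neg, neg_div, neg_neg, mul_div_assoc, div_self hk.ne', mul_one]
  have hint : IntegrableOn (fun x => Real.exp (-k * x)) (Ioi t) :=
    exp_neg_integrableOn_Ioi t hk
  have htend : Tendsto (fun x => -Real.exp (-k * x) / k) atTop (nhds 0) := by
    have h1 : Tendsto (fun x : ℝ => -k * x) atTop atBot :=
      tendsto_id.const_mul_atTop_of_neg (by linarith)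
    have h2 := (Real.tendsto_exp_atBot.comp h1).neg.div_const k
    simpa using h2
  have := MeasureTheory.integral_Ioi_of_hasDerivAt_of_tendsto'
    hderiv hint htend
  rw [this]; field_simp; ring

lemma rho_pos (s : ℝ) : 0 < rhoWeight s := by
  have := Real.exp_pos |s|; unfold rhoWeight; positivity

lemma rho_ge_one (s : ℝ) : 1 ≤ rhoWeight s := by
  have := (Real.exp_pos |s|).le; unfold rhoWeight; linarith

lemma rho_le (s : ℝ) : rhoWeight s ≤ 2 * Real.exp |s| := by
  have : (1:ℝ) ≤ Real.exp |s| := Real.one_le_exp (abs_nonneg s)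
  unfold rhoWeight; linarith

lemma rho_inv_le (s : ℝ) : (rhoWeight s)⁻¹ ≤ 2 * Real.exp |s| := by
  have h1 : (rhoWeight s)⁻¹ ≤ 1 := inv_le_one_of_one_le₀ (rho_ge_one s)
  have : (1:ℝ) ≤ Real.exp |s| := Real.one_le_exp (abs_nonneg s)
  linarith

theorem stmt_1 (a₁ α₁ b₁ β₁ : ℝ) (ha : 1 ≤ a₁ - α₁) (hb : 1 ≤ b₁ - β₁)
    (hab : 0 < a₁ + b₁) :
    ∃ C > 0, ∀ (s' : ℝ) (ρ₁ ρ₂ : ℝ → ℝ),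
      (ρ₁ = rhoWeight ∨ ρ₁ = fun s => (rhoWeight s)⁻¹) →
      (ρ₂ = rhoWeight ∨ ρ₂ = fun s => (rhoWeight s)⁻¹) →
      ∀ (α β a b : ℝ → ℝ) (α₀ β₀ a₀ b₀ : ℝ),
        Measurable α → Measurable β → Measurable a → Measurable b →
        0 ≤ α₀ → 0 ≤ β₀ → 0 ≤ a₀ → 0 ≤ b₀ →
        (∀ u ≥ s', |α u| ≤ α₀ * Real.exp (α₁ * u)) →
        (∀ u ≥ s', |β u| ≤ β₀ * Real.exp (β₁ * u)) →
        (∀ u ≥ s', |a u| ≤ a₀ * Real.exp (-a₁ * u)) →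
        (∀ u ≥ s', |b u| ≤ b₀ * Real.exp (-b₁ * u)) →
        Real.sqrt (∫ u in Ioi s', ∫ v in Ioi s',
            (α u * β v * ∫ z in Ioi (0 : ℝ), a (u + z) * b (v + z)) ^ 2
              * ρ₂ u * (ρ₁ v)⁻¹)
          ≤ C * (α₀ * β₀ * a₀ * b₀ / (a₁ + b₁)) *
              Real.exp (-(a₁ + b₁ - α₁ - β₁) * s' + |s'|) := by
  refine ⟨2, by norm_num, ?_⟩
  intro s' ρ₁ ρ₂ hρ₁ hρ₂ α β a b α₀ β₀ a₀ b₀ hmα hmβ hma hmb hα₀ hβ₀ ha₀ hb₀ hα hβ hha hhb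
  set ca := a₁ - α₁ with hca_def
  set cb := b₁ - β₁ with hcb_def
  set K := α₀ * β₀ * a₀ * b₀ / (a₁ + b₁) with hK_def
  have hK0 : 0 ≤ K := by positivity
  -- weight bounds
  have hw2 : ∀ u : ℝ, 0 < ρ₂ u ∧ ρ₂ u ≤ 2 * Real.exp |u| := by
    rcases hρ₂ with rfl | rfl
    · exact fun u => ⟨rho_pos u, rho_le u⟩
    · exact fun u => ⟨inv_pos.2 (rho_pos u), rho_inv_le u⟩
  have hw1 : ∀ v : ℝ, 0 < (ρ₁ v)⁻¹ ∧ (ρ₁ v)⁻¹ ≤ 2 * Real.exp |v| := by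
    rcases hρ₁ with rfl | rfl
    · exact fun v => ⟨inv_pos.2 (rho_pos v), rho_inv_le v⟩
    · exact fun v => ⟨by simp only [inv_inv]; exact rho_pos v,
        by simp only [inv_inv]; exact rho_le v⟩
  -- inner z-integral bound
  have hIb : ∀ u v : ℝ, s' ≤ u → s' ≤ v →
      |∫ z in Ioi (0:ℝ), a (u + z) * b (v + z)| ≤
        a₀ * b₀ / (a₁ + b₁) * Real.exp (-a₁ * u - b₁ * v) := by
    intro u v hu hv
    have hmaj : IntegrableOn
        (fun z => a₀ * b₀ * Real.exp (-a₁ * u - b₁ * v) * Real.exp (-(a₁ + b₁) * z))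
        (Ioi (0:ℝ)) := (exp_neg_integrableOn_Ioi 0 hab).const_mul _
    have hle : ∀ᵐ z ∂(volume.restrict (Ioi (0:ℝ))),
        ‖a (u + z) * b (v + z)‖ ≤
          a₀ * b₀ * Real.exp (-a₁ * u - b₁ * v) * Real.exp (-(a₁ + b₁) * z) := by
      filter_upwards [ae_restrict_mem measurableSet_Ioi] with z hz
      have hz' : (0:ℝ) < z := hz
      have h1 := hha (u + z) (by linarith)
      have h2 := hhb (v + z) (by linarith)
      rw [Real.norm_eq_abs, abs_mul]
      have hexp : Real.exp (-a₁ * (u + z)) * Real.exp (-b₁ * (v + z)) =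
          Real.exp (-a₁ * u - b₁ * v) * Real.exp (-(a₁ + b₁) * z) := by
        rw [← Real.exp_add, ← Real.exp_add]; ring_nf
      calc |a (u + z)| * |b (v + z)|
          ≤ (a₀ * Real.exp (-a₁ * (u + z))) * (b₀ * Real.exp (-b₁ * (v + z))) :=
            mul_le_mul h1 h2 (abs_nonneg _) (by positivity)
        _ = a₀ * b₀ * (Real.exp (-a₁ * (u + z)) * Real.exp (-b₁ * (v + z))) := by ring
        _ = a₀ * b₀ * (Real.exp (-a₁ * u - b₁ * v) * Real.exp (-(a₁ + b₁) * z)) := by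
            rw [hexp]
        _ = a₀ * b₀ * Real.exp (-a₁ * u - b₁ * v) * Real.exp (-(a₁ + b₁) * z) := by ring
    calc |∫ z in Ioi (0:ℝ), a (u + z) * b (v + z)|
        = ‖∫ z in Ioi (0:ℝ), a (u + z) * b (v + z)‖ := (Real.norm_eq_abs _).symm
      _ ≤ ∫ z in Ioi (0:ℝ),
            a₀ * b₀ * Real.exp (-a₁ * u - b₁ * v) * Real.exp (-(a₁ + b₁) * z) :=
          norm_integral_le_of_norm_le hmaj hle
      _ = a₀ * b₀ * Real.exp (-a₁ * u - b₁ * v) * (Real.exp (-(a₁ + b₁) * 0) / (a₁ + b₁)) := by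
          rw [MeasureTheory.integral_const_mul, my_integral_exp_neg_mul_Ioi hab]
      _ = a₀ * b₀ / (a₁ + b₁) * Real.exp (-a₁ * u - b₁ * v) := by
          rw [mul_zero, Real.exp_zero]; ring
  -- kernel squared bound
  have hD2 : ∀ u v : ℝ, s' ≤ u → s' ≤ v →
      (α u * β v * ∫ z in Ioi (0:ℝ), a (u + z) * b (v + z)) ^ 2 ≤
        K ^ 2 * Real.exp (-(2 * ca) * u) * Real.exp (-(2 * cb) * v) := by
    intro u v hu hv
    have hD : |α u * β v * ∫ z in Ioi (0:ℝ), a (u + z) * b (v + z)| ≤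
        K * Real.exp (-ca * u) * Real.exp (-cb * v) := by
      have hexp : Real.exp (α₁ * u) * Real.exp (β₁ * v) * Real.exp (-a₁ * u - b₁ * v) =
          Real.exp (-ca * u) * Real.exp (-cb * v) := by
        rw [← Real.exp_add, ← Real.exp_add, ← Real.exp_add, hca_def, hcb_def]; ring_nf
      calc |α u * β v * ∫ z in Ioi (0:ℝ), a (u + z) * b (v + z)|
          = |α u| * |β v| * |∫ z in Ioi (0:ℝ), a (u + z) * b (v + z)| := by
            rw [abs_mul, abs_mul]
        _ ≤ (α₀ * Real.exp (α₁ * u)) * (β₀ * Real.exp (β₁ * v)) *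
              (a₀ * b₀ / (a₁ + b₁) * Real.exp (-a₁ * u - b₁ * v)) :=
            mul_le_mul (mul_le_mul (hα u hu) (hβ v hv) (abs_nonneg _) (by positivity))
              (hIb u v hu hv) (abs_nonneg _) (by positivity)
        _ = K * (Real.exp (α₁ * u) * Real.exp (β₁ * v) * Real.exp (-a₁ * u - b₁ * v)) := by
            rw [hK_def]; ring
        _ = K * (Real.exp (-ca * u) * Real.exp (-cb * v)) := by rw [hexp]
        _ = K * Real.exp (-ca * u) * Real.exp (-cb * v) := by ring
    have hsq : (α u * β v * ∫ z in Ioi (0:ℝ), a (u + z) * b (v + z)) ^ 2 ≤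
        (K * Real.exp (-ca * u) * Real.exp (-cb * v)) ^ 2 := by
      rw [← sq_abs]
      exact pow_le_pow_left₀ (abs_nonneg _) hD 2
    refine hsq.trans_eq ?_
    rw [show -(2 * ca) * u = -ca * u + -ca * u by ring,
        show -(2 * cb) * v = -cb * v + -cb * v by ring, Real.exp_add, Real.exp_add]
    ring
  -- the two one-dimensional majorants
  have habsle : ∀ u : ℝ, s' ≤ u → |u| ≤ (|s'| - s') + u := by
    intro u hu
    have h := abs_add_le (u - s') s'
    rw [sub_add_cancel] at h
    rw [abs_of_nonneg (by linarith : (0:ℝ) ≤ u - s')] at h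
    linarith
  -- full pointwise bound
  have hca1 : 1 ≤ ca := ha
  have hcb1 : 1 ≤ cb := hb
  set g : ℝ → ℝ := fun x => Real.exp (|s'| - s') * Real.exp (-(2 * ca - 1) * x) with hg_def
  set g' : ℝ → ℝ := fun x => Real.exp (|s'| - s') * Real.exp (-(2 * cb - 1) * x) with hg'_def
  have hfb : ∀ u ∈ Ioi s', ∀ v ∈ Ioi s',
      (α u * β v * ∫ z in Ioi (0:ℝ), a (u + z) * b (v + z)) ^ 2 * ρ₂ u * (ρ₁ v)⁻¹ ≤
        4 * K ^ 2 * g u * g' v := by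
    intro u hu v hv
    have hu' : s' ≤ u := le_of_lt hu
    have hv' : s' ≤ v := le_of_lt hv
    have h2u : ρ₂ u ≤ 2 * Real.exp ((|s'| - s') + u) :=
      (hw2 u).2.trans (mul_le_mul_of_nonneg_left
        (Real.exp_le_exp.2 (habsle u hu')) (by norm_num))
    have h1v : (ρ₁ v)⁻¹ ≤ 2 * Real.exp ((|s'| - s') + v) :=
      (hw1 v).2.trans (mul_le_mul_of_nonneg_left
        (Real.exp_le_exp.2 (habsle v hv')) (by norm_num))
    calc (α u * β v * ∫ z in Ioi (0:ℝ), a (u + z) * b (v + z)) ^ 2 * ρ₂ u * (ρ₁ v)⁻¹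
        ≤ (K ^ 2 * Real.exp (-(2 * ca) * u) * Real.exp (-(2 * cb) * v)) *
            (2 * Real.exp ((|s'| - s') + u)) * (2 * Real.exp ((|s'| - s') + v)) := by
          apply mul_le_mul
          · apply mul_le_mul (hD2 u v hu' hv') h2u (hw2 u).1.le (by positivity)
          · exact h1v
          · exact (hw1 v).1.le
          · positivity
      _ = 4 * K ^ 2 * g u * g' v := by
          have e1 : Real.exp (-(2 * ca) * u) * Real.exp ((|s'| - s') + u) = g u := by
            simp only [hg_def]
            rw [← Real.exp_add, ← Real.exp_add]; congr 1; ring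
          have e2 : Real.exp (-(2 * cb) * v) * Real.exp ((|s'| - s') + v) = g' v := by
            simp only [hg'_def]
            rw [← Real.exp_add, ← Real.exp_add]; congr 1; ring
          calc (K ^ 2 * Real.exp (-(2 * ca) * u) * Real.exp (-(2 * cb) * v)) *
              (2 * Real.exp ((|s'| - s') + u)) * (2 * Real.exp ((|s'| - s') + v))
              = 4 * K ^ 2 * (Real.exp (-(2 * ca) * u) * Real.exp ((|s'| - s') + u)) *
                (Real.exp (-(2 * cb) * v) * Real.exp ((|s'| - s') + v)) := by ring
            _ = 4 * K ^ 2 * g u * g' v := by rw [e1, e2]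
  -- integrability and value of the majorants
  have hg_int : ∀ t : ℝ, IntegrableOn g (Ioi t) :=
    fun t => (exp_neg_integrableOn_Ioi t (by linarith)).const_mul _
  have hg'_int : ∀ t : ℝ, IntegrableOn g' (Ioi t) :=
    fun t => (exp_neg_integrableOn_Ioi t (by linarith)).const_mul _
  have hg_val : (∫ x in Ioi s', g x) ≤ Real.exp (|s'| - 2 * ca * s') := by
    simp only [hg_def]
    rw [MeasureTheory.integral_const_mul,
        my_integral_exp_neg_mul_Ioi (by linarith : (0:ℝ) < 2 * ca - 1)]
    calc Real.exp (|s'| - s') * (Real.exp (-(2 * ca - 1) * s') / (2 * ca - 1))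
        ≤ Real.exp (|s'| - s') * Real.exp (-(2 * ca - 1) * s') :=
          mul_le_mul_of_nonneg_left (div_le_self (Real.exp_pos _).le (by linarith))
            (Real.exp_pos _).le
      _ = Real.exp (|s'| - 2 * ca * s') := by rw [← Real.exp_add]; congr 1; ring
  have hg'_val : (∫ x in Ioi s', g' x) ≤ Real.exp (|s'| - 2 * cb * s') := by
    simp only [hg'_def]
    rw [MeasureTheory.integral_const_mul,
        my_integral_exp_neg_mul_Ioi (by linarith : (0:ℝ) < 2 * cb - 1)]
    calc Real.exp (|s'| - s') * (Real.exp (-(2 * cb - 1) * s') / (2 * cb - 1))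
        ≤ Real.exp (|s'| - s') * Real.exp (-(2 * cb - 1) * s') :=
          mul_le_mul_of_nonneg_left (div_le_self (Real.exp_pos _).le (by linarith))
            (Real.exp_pos _).le
      _ = Real.exp (|s'| - 2 * cb * s') := by rw [← Real.exp_add]; congr 1; ring
  have hg_nonneg : ∀ x, 0 ≤ g x := fun x => by rw [hg_def]; positivity
  have hg'_nonneg : ∀ x, 0 ≤ g' x := fun x => by rw [hg'_def]; positivity
  -- nonnegativity of the integrand
  have hf0 : ∀ u v : ℝ,
      0 ≤ (α u * β v * ∫ z in Ioi (0:ℝ), a (u + z) * b (v + z)) ^ 2 * ρ₂ u * (ρ₁ v)⁻¹ :=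
    fun u v => mul_nonneg (mul_nonneg (sq_nonneg _) (hw2 u).1.le) (hw1 v).1.le
  -- bound the inner integral
  have hinner : ∀ u ∈ Ioi s',
      (∫ v in Ioi s',
        (α u * β v * ∫ z in Ioi (0:ℝ), a (u + z) * b (v + z)) ^ 2 * ρ₂ u * (ρ₁ v)⁻¹) ≤
        (4 * K ^ 2 * Real.exp (|s'| - 2 * cb * s')) * g u := by
    intro u hu
    calc (∫ v in Ioi s',
          (α u * β v * ∫ z in Ioi (0:ℝ), a (u + z) * b (v + z)) ^ 2 * ρ₂ u * (ρ₁ v)⁻¹)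
        ≤ ∫ v in Ioi s', (4 * K ^ 2 * g u) * g' v := by
          apply MeasureTheory.integral_mono_of_nonneg
          · exact Filter.Eventually.of_forall fun v => hf0 u v
          · exact (hg'_int s').const_mul _
          · filter_upwards [ae_restrict_mem measurableSet_Ioi] with v hv
            calc (α u * β v * ∫ z in Ioi (0:ℝ), a (u + z) * b (v + z)) ^ 2 * ρ₂ u * (ρ₁ v)⁻¹
                ≤ 4 * K ^ 2 * g u * g' v := hfb u hu v hv
              _ = (4 * K ^ 2 * g u) * g' v := by ring
      _ = (4 * K ^ 2 * g u) * ∫ v in Ioi s', g' v := MeasureTheory.integral_const_mul _ _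
      _ ≤ (4 * K ^ 2 * g u) * Real.exp (|s'| - 2 * cb * s') := by
          apply mul_le_mul_of_nonneg_left hg'_val
          have := hg_nonneg u; positivity
      _ = (4 * K ^ 2 * Real.exp (|s'| - 2 * cb * s')) * g u := by ring
  -- bound the double integral
  have hX : (∫ u in Ioi s', ∫ v in Ioi s',
      (α u * β v * ∫ z in Ioi (0:ℝ), a (u + z) * b (v + z)) ^ 2 * ρ₂ u * (ρ₁ v)⁻¹) ≤
      (4 * K ^ 2 * Real.exp (|s'| - 2 * cb * s')) * Real.exp (|s'| - 2 * ca * s') := by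
    calc (∫ u in Ioi s', ∫ v in Ioi s',
          (α u * β v * ∫ z in Ioi (0:ℝ), a (u + z) * b (v + z)) ^ 2 * ρ₂ u * (ρ₁ v)⁻¹)
        ≤ ∫ u in Ioi s', (4 * K ^ 2 * Real.exp (|s'| - 2 * cb * s')) * g u := by
          apply MeasureTheory.integral_mono_of_nonneg
          · exact Filter.Eventually.of_forall fun u =>
              MeasureTheory.integral_nonneg fun v => hf0 u v
          · exact (hg_int s').const_mul _
          · filter_upwards [ae_restrict_mem measurableSet_Ioi] with u hu
            exact hinner u hu
      _ = (4 * K ^ 2 * Real.exp (|s'| - 2 * cb * s')) * ∫ u in Ioi s', g u :=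
          MeasureTheory.integral_const_mul _ _
      _ ≤ (4 * K ^ 2 * Real.exp (|s'| - 2 * cb * s')) * Real.exp (|s'| - 2 * ca * s') := by
          apply mul_le_mul_of_nonneg_left hg_val (by positivity)
  -- conclude
  have hsq : (4 * K ^ 2 * Real.exp (|s'| - 2 * cb * s')) * Real.exp (|s'| - 2 * ca * s') =
      (2 * K * Real.exp (-(ca + cb) * s' + |s'|)) ^ 2 := by
    have h1 : Real.exp (|s'| - 2 * cb * s') * Real.exp (|s'| - 2 * ca * s') =
        Real.exp (-(ca + cb) * s' + |s'|) * Real.exp (-(ca + cb) * s' + |s'|) := by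
      rw [← Real.exp_add, ← Real.exp_add]; ring_nf
    calc (4 * K ^ 2 * Real.exp (|s'| - 2 * cb * s')) * Real.exp (|s'| - 2 * ca * s')
        = 4 * K ^ 2 * (Real.exp (|s'| - 2 * cb * s') * Real.exp (|s'| - 2 * ca * s')) := by ring
      _ = 4 * K ^ 2 * (Real.exp (-(ca + cb) * s' + |s'|) * Real.exp (-(ca + cb) * s' + |s'|)) := by
          rw [h1]
      _ = (2 * K * Real.exp (-(ca + cb) * s' + |s'|)) ^ 2 := by ring
  calc Real.sqrt (∫ u in Ioi s', ∫ v in Ioi s',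
        (α u * β v * ∫ z in Ioi (0:ℝ), a (u + z) * b (v + z)) ^ 2 * ρ₂ u * (ρ₁ v)⁻¹)
      ≤ Real.sqrt ((2 * K * Real.exp (-(ca + cb) * s' + |s'|)) ^ 2) :=
        Real.sqrt_le_sqrt (hX.trans_eq hsq)
    _ = 2 * K * Real.exp (-(ca + cb) * s' + |s'|) := Real.sqrt_sq (by positivity)
    _ = 2 * (α₀ * β₀ * a₀ * b₀ / (a₁ + b₁)) * Real.exp (-(a₁ + b₁ - α₁ - β₁) * s' + |s'|) := by
        rw [hK_def, hca_def, hcb_def]; ring_nf
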